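/- Linear postponement of variable-exponential steps in the value substitution calculus: (1) if t →evar s →m u then t →m →evar u; (2) if t →evar →eλ u then t →eλ →e u (where →e = →eλ ∪ →evar). -/

import Mathlib

/-- Terms of the value substitution calculus, in de Bruijn notation:
variables, abstractions, applications and explicit substitutions
(`sub t u` is `t[x←u]`, binding de Bruijn index 0 of `t`). -/
inductive VTm : Type
  | var : Nat → VTm
  | lam : VTm → VTm
  | app : VTm → VTm → VTm
  | sub : VTm → VTm → VTm

namespace VTm

/-- Shift (by one) the free de Bruijn indices `≥ k`. -/
def shift (k : Nat) : VTm → VTm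
  | var n => if k ≤ n then var (n+1) else var n
  | lam t => lam (shift (k+1) t)
  | app t u => app (shift k t) (shift k u)
  | sub t u => sub (shift (k+1) t) (shift k u)

/-- Capture-avoiding (meta-level) substitution of `u` for variable `k`. -/
def subst : VTm → Nat → VTm → VTm
  | var n, k, u => if n = k then u else if k < n then var (n-1) else var n
  | lam t, k, u => lam (subst t (k+1) (shift 0 u))
  | app t s, k, u => app (subst t k u) (subst s k u)
  | sub t s, k, u => sub (subst t (k+1) (shift 0 u)) (subst s k u)

/-- vsub-values: variables and abstractions. -/
inductive IsVal : VTm → Prop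
  | var : IsVal (var n)
  | lam : IsVal (lam t)

/-- Multiplicative root rule `L⟨λx.t⟩u ↦m L⟨t[x←u]⟩` (the recursion on the
substitution context `L` performs the de Bruijn shifts corresponding to the
side condition that the variables bound by `L` do not occur free in `u`). -/
inductive RootM : VTm → VTm → Prop
  | beta : RootM (app (lam t) u) (sub t u)
  | under : RootM (app t (shift 0 u)) s → RootM (app (sub t r) u) (sub s r)

/-- Exponential root rule `t[x←L⟨v⟩] ↦e L⟨t{x:=v}⟩` for an abstraction `v`. -/
inductive RootEAbs : VTm → VTm → Prop
  | beta : RootEAbs (sub t (lam u)) (subst t 0 (lam u))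
  | under : RootEAbs (sub (shift 1 t) b) s → RootEAbs (sub t (sub b r)) (sub s r)

/-- Exponential root rule `t[x←L⟨v⟩] ↦e L⟨t{x:=v}⟩` for a variable `v`. -/
inductive RootEVar : VTm → VTm → Prop
  | beta : RootEVar (sub t (var n)) (subst t 0 (var n))
  | under : RootEVar (sub (shift 1 t) b) s → RootEVar (sub t (sub b r)) (sub s r)

/-- Closure of a root rule under the weak evaluation contexts
`E ::= ⟨·⟩ | t E | E t | E[x←u] | t[x←E]`. -/
inductive Clo (R : VTm → VTm → Prop) : VTm → VTm → Prop
  | root : R t u → Clo R t u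
  | appL : Clo R t t' → Clo R (app t u) (app t' u)
  | appR : Clo R u u' → Clo R (app t u) (app t u')
  | subL : Clo R t t' → Clo R (sub t u) (sub t' u)
  | subR : Clo R u u' → Clo R (sub t u) (sub t u')

/-- Multiplicative reduction `→m`. -/
def StepM : VTm → VTm → Prop := Clo RootM
/-- Abstraction-exponential reduction `→eλ`. -/
def StepEAbs : VTm → VTm → Prop := Clo RootEAbs
/-- Variable-exponential reduction `→evar`. -/
def StepEVar : VTm → VTm → Prop := Clo RootEVar
/-- Exponential reduction `→e = →eλ ∪ →evar`. -/
def StepE (t u : VTm) : Prop := StepEAbs t u ∨ StepEVar t u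
/-- vsub-reduction `→vsub = →m ∪ →e`. -/
def StepVsub (t u : VTm) : Prop := StepM t u ∨ StepE t u

/-- Swap the de Bruijn indices `k` and `k+1`. -/
def swap (k : Nat) : VTm → VTm
  | var n => if n = k then var (k+1) else if n = k+1 then var k else var n
  | lam t => lam (swap (k+1) t)
  | app t u => app (swap k t) (swap k u)
  | sub t u => sub (swap (k+1) t) (swap k u)

/-- Structural equivalence `≡`: least equivalence relation closed under
evaluation contexts generated by the four permutation axioms for explicit
substitutions (the de Bruijn shifts/swaps implement the freshness side
conditions). -/
inductive SEq : VTm → VTm → Prop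
  | com : SEq (sub (sub t (shift 0 s)) u) (sub (sub (swap 0 t) (shift 0 u)) s)
  | apR : SEq (app t (sub s u)) (sub (app (shift 0 t) s) u)
  | apL : SEq (app (sub t u) s) (sub (app t (shift 0 s)) u)
  | es  : SEq (sub t (sub u s)) (sub (sub (shift 1 t) u) s)
  | refl : SEq t t
  | symm : SEq t u → SEq u t
  | trans : SEq t u → SEq u s → SEq t s
  | appL : SEq t t' → SEq (app t u) (app t' u)
  | appR : SEq u u' → SEq (app t u) (app t u')
  | subL : SEq t t' → SEq (sub t u) (sub t' u)
  | subR : SEq u u' → SEq (sub t u) (sub t u')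

/-- Terms without explicit substitutions. -/
def NoES : VTm → Prop
  | var _ => True
  | lam t => NoES t
  | app t u => NoES t ∧ NoES u
  | sub _ _ => False

end VTm
open VTm

namespace VTm

/-! ### Renamings and parallel substitution infrastructure -/

def liftρ (ρ : Nat → Nat) : Nat → Nat
  | 0 => 0
  | n+1 => ρ n + 1

def ren (ρ : Nat → Nat) : VTm → VTm
  | var n => var (ρ n)
  | lam t => lam (ren (liftρ ρ) t)
  | app t u => app (ren ρ t) (ren ρ u)
  | sub t u => sub (ren (liftρ ρ) t) (ren ρ u)

def upσ (σ : Nat → VTm) : Nat → VTm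
  | 0 => var 0
  | n+1 => ren Nat.succ (σ n)

def psub (σ : Nat → VTm) : VTm → VTm
  | var n => σ n
  | lam t => lam (psub (upσ σ) t)
  | app t u => app (psub σ t) (psub σ u)
  | sub t u => sub (psub (upσ σ) t) (psub σ u)

theorem liftρ_comp (ρ τ : Nat → Nat) : liftρ (fun n => ρ (τ n)) = fun n => liftρ ρ (liftρ τ n) := by
  funext n; cases n <;> simp [liftρ]

theorem ren_ren (ρ τ : Nat → Nat) (t : VTm) : ren ρ (ren τ t) = ren (fun n => ρ (τ n)) t := by
  induction t generalizing ρ τ <;> simp [ren, liftρ_comp, *]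

theorem ren_congr {ρ τ : Nat → Nat} (h : ∀ n, ρ n = τ n) (t : VTm) : ren ρ t = ren τ t := by
  have : ρ = τ := funext h
  rw [this]

theorem psub_congr {σ τ : Nat → VTm} (h : ∀ n, σ n = τ n) (t : VTm) : psub σ t = psub τ t := by
  have : σ = τ := funext h
  rw [this]

theorem upσ_ren (σ : Nat → VTm) (ρ : Nat → Nat) :
    ∀ n, upσ (fun n => σ (ρ n)) n = upσ σ (liftρ ρ n) := by
  intro n; cases n <;> simp [upσ, liftρ]

theorem psub_ren (σ : Nat → VTm) (ρ : Nat → Nat) (t : VTm) :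
    psub σ (ren ρ t) = psub (fun n => σ (ρ n)) t := by
  induction t generalizing σ ρ with
  | var n => simp [ren, psub]
  | lam t ih => simp only [ren, psub, ih, psub_congr (upσ_ren σ ρ) t]
  | app t u iht ihu => simp [ren, psub, *]
  | sub t u iht ihu => simp only [ren, psub, ihu, iht, psub_congr (upσ_ren σ ρ) t]

theorem upσ_renρ (ρ : Nat → Nat) (σ : Nat → VTm) :
    ∀ n, upσ (fun n => ren ρ (σ n)) n = ren (liftρ ρ) (upσ σ n) := by
  intro n
  cases n with
  | zero => simp [upσ, ren, liftρ]
  | succ n =>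
    simp only [upσ, ren_ren]
    exact ren_congr (fun m => by cases m <;> simp [liftρ]) _

theorem ren_psub (ρ : Nat → Nat) (σ : Nat → VTm) (t : VTm) :
    ren ρ (psub σ t) = psub (fun n => ren ρ (σ n)) t := by
  induction t generalizing σ ρ with
  | var n => simp [ren, psub]
  | lam t ih => simp only [ren, psub, ih, psub_congr (upσ_renρ ρ σ) t]
  | app t u iht ihu => simp [ren, psub, *]
  | sub t u iht ihu => simp only [ren, psub, ihu, iht, psub_congr (upσ_renρ ρ σ) t]

theorem upσ_psub (σ τ : Nat → VTm) :
    ∀ n, upσ (fun n => psub σ (τ n)) n = psub (upσ σ) (upσ τ n) := by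
  intro n
  cases n with
  | zero => simp [upσ, psub]
  | succ n => simp only [upσ, psub_ren, ren_psub]

theorem psub_psub (σ τ : Nat → VTm) (t : VTm) :
    psub σ (psub τ t) = psub (fun n => psub σ (τ n)) t := by
  induction t generalizing σ τ with
  | var n => simp [psub]
  | lam t ih => simp only [psub, ih, psub_congr (upσ_psub σ τ) t]
  | app t u iht ihu => simp [psub, *]
  | sub t u iht ihu => simp only [psub, ihu, iht, psub_congr (upσ_psub σ τ) t]

theorem psub_varρ (ρ : Nat → Nat) (t : VTm) : psub (fun n => var (ρ n)) t = ren ρ t := by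
  induction t generalizing ρ with
  | var n => simp [psub, ren]
  | lam t ih =>
    have h : ∀ n, upσ (fun n => var (ρ n)) n = var (liftρ ρ n) := by
      intro n; cases n <;> simp [upσ, ren, liftρ]
    simp only [psub, ren, psub_congr h t, ih]
  | app t u iht ihu => simp [psub, ren, *]
  | sub t u iht ihu =>
    have h : ∀ n, upσ (fun n => var (ρ n)) n = var (liftρ ρ n) := by
      intro n; cases n <;> simp [upσ, ren, liftρ]
    simp only [psub, ren, psub_congr h t, ihu, iht]

theorem ren_id (t : VTm) : ren (fun n => n) t = t := by
  induction t with
  | var n => simp [ren]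
  | lam t ih =>
    have h : ∀ n, liftρ (fun n => n) n = n := by intro n; cases n <;> simp [liftρ]
    simp only [ren, ren_congr h t, ih]
  | app t u iht ihu => simp [ren, *]
  | sub t u iht ihu =>
    have h : ∀ n, liftρ (fun n => n) n = n := by intro n; cases n <;> simp [liftρ]
    simp only [ren, ren_congr h t, iht, ihu]

theorem psub_id (t : VTm) : psub (fun n => var n) t = t := by
  rw [psub_varρ, ren_id]

def shiftρ (k : Nat) : Nat → Nat := fun n => if k ≤ n then n+1 else n

theorem liftρ_shiftρ (k : Nat) : ∀ n, liftρ (shiftρ k) n = shiftρ (k+1) n := by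
  intro n
  cases n with
  | zero => simp [liftρ, shiftρ]
  | succ n => simp only [liftρ, shiftρ, Nat.succ_le_succ_iff]; split <;> rfl

theorem shift_eq (k : Nat) (t : VTm) : shift k t = ren (shiftρ k) t := by
  induction t generalizing k with
  | var n => simp only [shift, ren, shiftρ]; split <;> rfl
  | lam t ih => simp only [shift, ren, ih, ren_congr (liftρ_shiftρ k) t]
  | app t u iht ihu => simp [shift, ren, *]
  | sub t u iht ihu => simp only [shift, ren, iht, ihu, ren_congr (liftρ_shiftρ k) t]

def sσ (k : Nat) (v : VTm) : Nat → VTm :=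
  fun n => if n = k then v else if k < n then var (n-1) else var n

theorem upσ_sσ (k : Nat) (v : VTm) :
    ∀ n, sσ (k+1) (shift 0 v) n = upσ (sσ k v) n := by
  intro n
  rcases n with _ | n
  · simp [sσ, upσ]
  · simp only [sσ, upσ, shift_eq, ren_ren]
    rcases Nat.lt_trichotomy n k with h | h | h
    · have h1 : ¬ (n+1 = k+1) := by omega
      have h2 : ¬ (k+1 < n+1) := by omega
      have h3 : ¬ (n = k) := by omega
      have h4 : ¬ (k < n) := by omega
      simp [h1, h2, h3, h4, ren]
    · subst h
      simp only [if_pos rfl]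
      exact (ren_congr (fun m => by simp [shiftρ]) v).symm
    · have h1 : ¬ (n+1 = k+1) := by omega
      have h2 : (k+1 < n+1) := by omega
      have h3 : ¬ (n = k) := by omega
      simp only [h1, h2, h3, h, if_pos, if_neg, if_true, ite_false, ite_true, ren]
      congr 1
      omega

theorem subst_eq (t : VTm) (k : Nat) (v : VTm) : subst t k v = psub (sσ k v) t := by
  induction t generalizing k v with
  | var n => simp only [subst, psub, sσ]
  | lam t ih => simp only [subst, psub, ih, psub_congr (upσ_sσ k v) t]
  | app t u iht ihu => simp [subst, psub, *]
  | sub t u iht ihu => simp only [subst, psub, iht, ihu, psub_congr (upσ_sσ k v) t]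

def sρ (k n : Nat) : Nat → Nat :=
  fun m => if m = k then n else if k < m then m-1 else m

theorem subst_var_eq (t : VTm) (k n : Nat) : subst t k (var n) = ren (sρ k n) t := by
  rw [subst_eq, ← psub_varρ]
  exact psub_congr (fun m => by
    by_cases h : m = k
    · simp [sσ, sρ, h]
    · by_cases h2 : k < m <;> simp [sσ, sρ, h, h2]) t

end VTm

namespace VTm

/-! ### Inversion of `ren` on constructors -/

theorem ren_eq_var {ρ : Nat → Nat} {a : VTm} {n : Nat} (h : ren ρ a = var n) :
    ∃ m, a = var m ∧ ρ m = n := by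
  cases a <;> simp [ren] at h ⊢; exact h

theorem ren_eq_lam {ρ : Nat → Nat} {a x : VTm} (h : ren ρ a = lam x) :
    ∃ a₀, a = lam a₀ ∧ ren (liftρ ρ) a₀ = x := by
  cases a <;> simp [ren] at h ⊢; exact h

theorem ren_eq_app {ρ : Nat → Nat} {a x y : VTm} (h : ren ρ a = app x y) :
    ∃ a₁ a₂, a = app a₁ a₂ ∧ ren ρ a₁ = x ∧ ren ρ a₂ = y := by
  cases a <;> simp [ren] at h ⊢
  exact h

theorem ren_eq_sub {ρ : Nat → Nat} {a x y : VTm} (h : ren ρ a = sub x y) :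
    ∃ a₁ a₂, a = sub a₁ a₂ ∧ ren (liftρ ρ) a₁ = x ∧ ren ρ a₂ = y := by
  cases a <;> simp [ren] at h ⊢
  exact h

/-! ### Commutation helpers -/

theorem ren_shift0 (ρ : Nat → Nat) (u : VTm) :
    ren (liftρ ρ) (shift 0 u) = shift 0 (ren ρ u) := by
  simp only [shift_eq, ren_ren]
  exact ren_congr (fun n => by simp [shiftρ, liftρ]) u

theorem ren_shift1 (ρ : Nat → Nat) (u : VTm) :
    ren (liftρ (liftρ ρ)) (shift 1 u) = shift 1 (ren (liftρ ρ) u) := by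
  simp only [shift_eq, ren_ren]
  exact ren_congr (fun n => by
    cases n with
    | zero => simp [shiftρ, liftρ]
    | succ n => simp [shiftρ, liftρ]) u

theorem ren_subst0 (ρ : Nat → Nat) (t v : VTm) :
    ren ρ (subst t 0 v) = subst (ren (liftρ ρ) t) 0 (ren ρ v) := by
  simp only [subst_eq, ren_psub, psub_ren]
  exact psub_congr (fun n => by
    cases n with
    | zero => simp [sσ, liftρ]
    | succ n => simp [sσ, liftρ, ren]) t

/-! ### Preservation of root rules under renaming -/

theorem rootM_ren {a b : VTm} (h : RootM a b) : ∀ ρ, RootM (ren ρ a) (ren ρ b) := by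
  induction h with
  | beta => intro ρ; exact RootM.beta
  | @under t u s r h ih =>
    intro ρ
    show RootM (app (sub (ren (liftρ ρ) t) (ren ρ r)) (ren ρ u)) (sub (ren (liftρ ρ) s) (ren ρ r))
    apply RootM.under
    have := ih (liftρ ρ)
    simp only [ren] at this
    rwa [ren_shift0] at this

theorem rootEVar_ren {a b : VTm} (h : RootEVar a b) : ∀ ρ, RootEVar (ren ρ a) (ren ρ b) := by
  induction h with
  | @beta t n =>
    intro ρ
    show RootEVar (sub (ren (liftρ ρ) t) (var (ρ n))) (ren ρ (subst t 0 (var n)))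
    rw [ren_subst0]
    exact RootEVar.beta
  | @under t b s r h ih =>
    intro ρ
    show RootEVar (sub (ren (liftρ ρ) t) (sub (ren (liftρ ρ) b) (ren ρ r)))
      (sub (ren (liftρ ρ) s) (ren ρ r))
    apply RootEVar.under
    have := ih (liftρ ρ)
    simp only [ren] at this
    rwa [ren_shift1] at this

theorem rootEAbs_ren {a b : VTm} (h : RootEAbs a b) : ∀ ρ, RootEAbs (ren ρ a) (ren ρ b) := by
  induction h with
  | @beta t u =>
    intro ρ
    show RootEAbs (sub (ren (liftρ ρ) t) (lam (ren (liftρ ρ) u))) (ren ρ (subst t 0 (lam u)))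
    rw [ren_subst0]
    exact RootEAbs.beta
  | @under t b s r h ih =>
    intro ρ
    show RootEAbs (sub (ren (liftρ ρ) t) (sub (ren (liftρ ρ) b) (ren ρ r)))
      (sub (ren (liftρ ρ) s) (ren ρ r))
    apply RootEAbs.under
    have := ih (liftρ ρ)
    simp only [ren] at this
    rwa [ren_shift1] at this

end VTm

namespace VTm

/-! ### Reflection of root rules under renaming -/

theorem rootM_ren_inv : ∀ {x b : VTm}, RootM x b → ∀ {ρ : Nat → Nat} {a : VTm},
    x = ren ρ a → ∃ b₀, RootM a b₀ ∧ b = ren ρ b₀ := by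
  intro x b h
  induction h with
  | @beta t u =>
    intro ρ a he
    obtain ⟨a₁, a₂, rfl, h1, h2⟩ := ren_eq_app he.symm
    obtain ⟨t₀, rfl, h3⟩ := ren_eq_lam h1
    exact ⟨sub t₀ a₂, RootM.beta, by simp [ren, h2, h3]⟩
  | @under t u s r h ih =>
    intro ρ a he
    obtain ⟨a₁, a₂, rfl, h1, h2⟩ := ren_eq_app he.symm
    obtain ⟨t₀, r₀, rfl, h3, h4⟩ := ren_eq_sub h1
    have hx : app t (shift 0 u) = ren (liftρ ρ) (app t₀ (shift 0 a₂)) := by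
      simp [ren, ren_shift0, h2, h3]
    obtain ⟨s₀, hs₀, rfl⟩ := ih hx
    exact ⟨sub s₀ r₀, RootM.under hs₀, by simp [ren, h4]⟩

theorem rootEVar_ren_inv : ∀ {x b : VTm}, RootEVar x b → ∀ {ρ : Nat → Nat} {a : VTm},
    x = ren ρ a → ∃ b₀, RootEVar a b₀ ∧ b = ren ρ b₀ := by
  intro x b h
  induction h with
  | @beta t n =>
    intro ρ a he
    obtain ⟨a₁, a₂, rfl, h1, h2⟩ := ren_eq_sub he.symm
    obtain ⟨m, rfl, h3⟩ := ren_eq_var h2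
    refine ⟨subst a₁ 0 (var m), RootEVar.beta, ?_⟩
    rw [ren_subst0, h1]
    simp [ren, h3]
  | @under t b s r h ih =>
    intro ρ a he
    obtain ⟨a₁, a₂, rfl, h1, h2⟩ := ren_eq_sub he.symm
    obtain ⟨b₀, r₀, rfl, h3, h4⟩ := ren_eq_sub h2
    have hx : sub (shift 1 t) b = ren (liftρ ρ) (sub (shift 1 a₁) b₀) := by
      simp [ren, ren_shift1, h1, h3]
    obtain ⟨s₀, hs₀, rfl⟩ := ih hx
    exact ⟨sub s₀ r₀, RootEVar.under hs₀, by simp [ren, h4]⟩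

theorem rootEAbs_ren_inv : ∀ {x b : VTm}, RootEAbs x b → ∀ {ρ : Nat → Nat} {a : VTm},
    x = ren ρ a → ∃ b₀, RootEAbs a b₀ ∧ b = ren ρ b₀ := by
  intro x b h
  induction h with
  | @beta t u =>
    intro ρ a he
    obtain ⟨a₁, a₂, rfl, h1, h2⟩ := ren_eq_sub he.symm
    obtain ⟨v₀, rfl, h3⟩ := ren_eq_lam h2
    refine ⟨subst a₁ 0 (lam v₀), RootEAbs.beta, ?_⟩
    rw [ren_subst0, h1]
    simp [ren, h3]
  | @under t b s r h ih =>
    intro ρ a he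
    obtain ⟨a₁, a₂, rfl, h1, h2⟩ := ren_eq_sub he.symm
    obtain ⟨b₀, r₀, rfl, h3, h4⟩ := ren_eq_sub h2
    have hx : sub (shift 1 t) b = ren (liftρ ρ) (sub (shift 1 a₁) b₀) := by
      simp [ren, ren_shift1, h1, h3]
    obtain ⟨s₀, hs₀, rfl⟩ := ih hx
    exact ⟨sub s₀ r₀, RootEAbs.under hs₀, by simp [ren, h4]⟩

/-! ### Closure under contexts: preservation and reflection under renaming -/

theorem clo_ren {R : VTm → VTm → Prop}
    (hR : ∀ {a b : VTm}, R a b → ∀ ρ, R (ren ρ a) (ren ρ b)) :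
    ∀ {a b : VTm}, Clo R a b → ∀ ρ, Clo R (ren ρ a) (ren ρ b) := by
  intro a b h
  induction h with
  | root h => exact fun ρ => Clo.root (hR h ρ)
  | appL h ih => exact fun ρ => Clo.appL (ih ρ)
  | appR h ih => exact fun ρ => Clo.appR (ih ρ)
  | subL h ih => exact fun ρ => Clo.subL (ih (liftρ ρ))
  | subR h ih => exact fun ρ => Clo.subR (ih ρ)

theorem clo_ren_inv {R : VTm → VTm → Prop}
    (hR : ∀ {x b : VTm}, R x b → ∀ {ρ : Nat → Nat} {a : VTm},
      x = ren ρ a → ∃ b₀, R a b₀ ∧ b = ren ρ b₀) :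
    ∀ {x b : VTm}, Clo R x b → ∀ {ρ : Nat → Nat} {a : VTm},
      x = ren ρ a → ∃ b₀, Clo R a b₀ ∧ b = ren ρ b₀ := by
  intro x b h
  induction h with
  | root h =>
    intro ρ a he
    obtain ⟨b₀, h1, h2⟩ := hR h he
    exact ⟨b₀, Clo.root h1, h2⟩
  | @appL t t' u h ih =>
    intro ρ a he
    obtain ⟨a₁, a₂, rfl, h1, h2⟩ := ren_eq_app he.symm
    obtain ⟨b₀, hb, rfl⟩ := ih h1.symm
    exact ⟨app b₀ a₂, Clo.appL hb, by simp [ren, h2]⟩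
  | @appR u u' t h ih =>
    intro ρ a he
    obtain ⟨a₁, a₂, rfl, h1, h2⟩ := ren_eq_app he.symm
    obtain ⟨b₀, hb, rfl⟩ := ih h2.symm
    exact ⟨app a₁ b₀, Clo.appR hb, by simp [ren, h1]⟩
  | @subL t t' u h ih =>
    intro ρ a he
    obtain ⟨a₁, a₂, rfl, h1, h2⟩ := ren_eq_sub he.symm
    obtain ⟨b₀, hb, rfl⟩ := ih h1.symm
    exact ⟨sub b₀ a₂, Clo.subL hb, by simp [ren, h2]⟩
  | @subR u u' t h ih =>
    intro ρ a he
    obtain ⟨a₁, a₂, rfl, h1, h2⟩ := ren_eq_sub he.symm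
    obtain ⟨b₀, hb, rfl⟩ := ih h2.symm
    exact ⟨sub a₁ b₀, Clo.subR hb, by simp [ren, h1]⟩

end VTm

namespace VTm

/-! ### Additional renaming facts -/

theorem ren_sρ0_shift0 (n : Nat) (W : VTm) : ren (sρ 0 n) (shift 0 W) = W := by
  rw [shift_eq, ren_ren]
  have : ∀ m, sρ 0 n (shiftρ 0 m) = m := by intro m; simp [sρ, shiftρ]
  rw [ren_congr this, ren_id]

theorem shift0_shift0 (W : VTm) : shift 0 (shift 0 W) = ren (shiftρ 1) (shift 0 W) := by
  simp only [shift_eq, ren_ren]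
  exact ren_congr (fun m => by simp [shiftρ]) W

theorem clo_shift0 {R : VTm → VTm → Prop}
    (hR : ∀ {a b : VTm}, R a b → ∀ ρ, R (ren ρ a) (ren ρ b))
    {a b : VTm} (h : Clo R a b) : Clo R (shift 0 a) (shift 0 b) := by
  rw [shift_eq, shift_eq]; exact clo_ren hR h _

/-! ### Inversion of an evar context step into an application / substitution -/

theorem rootEVar_inv {t s : VTm} (h : RootEVar t s) :
    (∃ a n, t = sub a (var n) ∧ s = subst a 0 (var n)) ∨
    (∃ a b r s₀, t = sub a (sub b r) ∧ s = sub s₀ r ∧ RootEVar (sub (shift 1 a) b) s₀) := by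
  cases h with
  | beta => exact Or.inl ⟨_, _, rfl, rfl⟩
  | under h => exact Or.inr ⟨_, _, _, _, rfl, rfl, h⟩

theorem clo_evar_app_inv {t p w : VTm} (h : Clo RootEVar t (app p w)) :
    (∃ a₁ a₂ n, t = sub (app a₁ a₂) (var n) ∧ p = ren (sρ 0 n) a₁ ∧ w = ren (sρ 0 n) a₂) ∨
    (∃ X, t = app X w ∧ Clo RootEVar X p) ∨
    (∃ Y, t = app p Y ∧ Clo RootEVar Y w) := by
  cases h with
  | root hr =>
    rcases rootEVar_inv hr with ⟨a, n, rfl, he⟩ | ⟨a, b, r, s₀, rfl, he, _⟩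
    · rw [subst_var_eq] at he
      obtain ⟨a₁, a₂, rfl, h1, h2⟩ := ren_eq_app he.symm
      exact Or.inl ⟨a₁, a₂, n, rfl, h1.symm, h2.symm⟩
    · exact absurd he (by simp)
  | appL h => exact Or.inr (Or.inl ⟨_, rfl, h⟩)
  | appR h => exact Or.inr (Or.inr ⟨_, rfl, h⟩)

theorem clo_evar_sub_inv {t p w : VTm} (h : Clo RootEVar t (sub p w)) :
    (∃ a₁ a₂ n, t = sub (sub a₁ a₂) (var n) ∧
        p = ren (liftρ (sρ 0 n)) a₁ ∧ w = ren (sρ 0 n) a₂) ∨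
    (∃ a b, t = sub a (sub b w) ∧ RootEVar (sub (shift 1 a) b) p) ∨
    (∃ X, t = sub X w ∧ Clo RootEVar X p) ∨
    (∃ Y, t = sub p Y ∧ Clo RootEVar Y w) := by
  cases h with
  | root hr =>
    rcases rootEVar_inv hr with ⟨a, n, rfl, he⟩ | ⟨a, b, r, s₀, rfl, he, hp⟩
    · rw [subst_var_eq] at he
      obtain ⟨a₁, a₂, rfl, h1, h2⟩ := ren_eq_sub he.symm
      exact Or.inl ⟨a₁, a₂, n, rfl, h1.symm, h2.symm⟩
    · injection he with he1 he2
      subst he1; subst he2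
      exact Or.inr (Or.inl ⟨a, b, rfl, hp⟩)
  | subL h => exact Or.inr (Or.inr (Or.inl ⟨_, rfl, h⟩))
  | subR h => exact Or.inr (Or.inr (Or.inr ⟨_, rfl, h⟩))

/-! ### Part 1 : postponement of evar before m -/

theorem lemC : ∀ {X p : VTm}, RootEVar X p → ∀ {W q : VTm}, RootM (app p W) q →
    ∃ Z, RootM (app X W) Z ∧ RootEVar Z q := by
  intro X p h
  induction h with
  | @beta a n =>
    intro W q hm
    rw [subst_var_eq] at hm
    have he : app (ren (sρ 0 n) a) W = ren (sρ 0 n) (app a (shift 0 W)) := by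
      simp [ren, ren_sρ0_shift0]
    rw [he] at hm
    obtain ⟨q₀, hq₀, rfl⟩ := rootM_ren_inv hm rfl
    refine ⟨sub q₀ (var n), RootM.under ?_, ?_⟩
    · exact hq₀
    · have := RootEVar.beta (t := q₀) (n := n)
      rwa [subst_var_eq] at this
  | @under a b s₀ r P ih =>
    intro W q hm
    cases hm with
    | @under _ _ q₁ _ h₂ =>
      obtain ⟨Z₁, hZ₁, hZq⟩ := ih h₂
      cases hZ₁ with
      | @under _ _ Z₂ _ h₃ =>
        have he : app (shift 1 a) (shift 0 (shift 0 W)) =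
            ren (shiftρ 1) (app a (shift 0 W)) := by
          rw [shift0_shift0]
          simp [ren, shift_eq]
        rw [he] at h₃
        obtain ⟨Z₃, hZ₃, rfl⟩ := rootM_ren_inv h₃ rfl
        refine ⟨sub Z₃ (sub b r), RootM.under hZ₃, RootEVar.under ?_⟩
        rw [shift_eq]
        exact hZq

theorem lemD : ∀ {x q : VTm}, RootM x q → ∀ {p W : VTm}, x = app p W →
    ∀ {W' : VTm}, Clo RootEVar W' W → ∃ Z, RootM (app p W') Z ∧ Clo RootEVar Z q := by
  intro x q h
  induction h with
  | @beta t u =>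
    intro p W he W' hc
    injection he with he1 he2
    subst he1; subst he2
    exact ⟨sub t W', RootM.beta, Clo.subR hc⟩
  | @under t u s r h ih =>
    intro p W he W' hc
    injection he with he1 he2
    subst he1; subst he2
    obtain ⟨Z₁, h1, h2⟩ := ih rfl (clo_shift0 rootEVar_ren hc)
    exact ⟨sub Z₁ r, RootM.under h1, Clo.subL h2⟩

theorem lemC' : ∀ {x q : VTm}, RootM x q → ∀ {p W : VTm}, x = app p W →
    ∀ {X : VTm}, Clo RootEVar X p → ∃ Z, RootM (app X W) Z ∧ Clo RootEVar Z q := by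
  intro x q h
  induction h with
  | @beta t u =>
    intro p W he X hc
    injection he with he1 he2
    subst he1; subst he2
    cases hc with
    | root hr =>
      obtain ⟨Z, h1, h2⟩ := lemC hr RootM.beta
      exact ⟨Z, h1, Clo.root h2⟩
  | @under t u s r h ih =>
    intro p W he X hc
    injection he with he1 he2
    subst he1; subst he2
    cases hc with
    | root hr =>
      obtain ⟨Z, h1, h2⟩ := lemC hr (RootM.under h)
      exact ⟨Z, h1, Clo.root h2⟩
    | @subL X₁ _ _ hb =>
      obtain ⟨Z₁, h1, h2⟩ := ih rfl hb
      exact ⟨sub Z₁ r, RootM.under h1, Clo.subL h2⟩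
    | @subR X₂ _ _ hr =>
      exact ⟨sub s X₂, RootM.under h, Clo.subR hr⟩

theorem root1 : ∀ {t s : VTm}, RootEVar t s → ∀ {u : VTm}, Clo RootM s u →
    ∃ r, Clo RootM t r ∧ RootEVar r u := by
  intro t s h
  induction h with
  | @beta a n =>
    intro u hm
    rw [subst_var_eq] at hm
    obtain ⟨a', ha', rfl⟩ := clo_ren_inv rootM_ren_inv hm rfl
    refine ⟨sub a' (var n), Clo.subL ha', ?_⟩
    have := RootEVar.beta (t := a') (n := n)
    rwa [subst_var_eq] at this
  | @under a b s₀ r₀ P ih =>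
    intro u hm
    cases hm with
    | root hr => cases hr
    | @subL _ s₀' _ hs =>
      obtain ⟨r₁, h1, h2⟩ := ih hs
      cases h1 with
      | root hr => cases hr
      | @subL _ a₁ _ ha =>
        rw [shift_eq] at ha
        obtain ⟨a₀, ha₀, rfl⟩ := clo_ren_inv rootM_ren_inv ha rfl
        refine ⟨sub a₀ (sub b r₀), Clo.subL ha₀, RootEVar.under ?_⟩
        rwa [shift_eq]
      | @subR _ b₁ _ hb =>
        exact ⟨sub a (sub b₁ r₀), Clo.subR (Clo.subL hb), RootEVar.under h2⟩
    | @subR _ r₀' _ hr =>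
      exact ⟨sub a (sub b r₀'), Clo.subR (Clo.subR hr), RootEVar.under P⟩

theorem root2' : ∀ {t s : VTm}, Clo RootEVar t s → ∀ {u : VTm}, RootM s u →
    ∃ r, Clo RootM t r ∧ Clo RootEVar r u := by
  intro t s h1
  cases h1 with
  | root hr =>
    cases hr with
    | @beta a n =>
      intro u h2
      rw [subst_var_eq] at h2
      obtain ⟨u₀, h, rfl⟩ := rootM_ren_inv h2 rfl
      refine ⟨sub u₀ (var n), Clo.subL (Clo.root h), Clo.root ?_⟩
      have := RootEVar.beta (t := u₀) (n := n)
      rwa [subst_var_eq] at this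
    | under h => intro u h2; cases h2
  | @appL X p w h =>
    intro u h2
    obtain ⟨Z, h1, hz⟩ := lemC' h2 rfl h
    exact ⟨Z, Clo.root h1, hz⟩
  | @appR t₂ w p h =>
    intro u h2
    obtain ⟨Z, hz1, hz2⟩ := lemD h2 rfl h
    exact ⟨Z, Clo.root hz1, hz2⟩
  | subL h => intro u h2; cases h2
  | subR h => intro u h2; cases h2

theorem main1 : ∀ {s u : VTm}, Clo RootM s u → ∀ {t : VTm}, Clo RootEVar t s →
    ∃ r, Clo RootM t r ∧ Clo RootEVar r u := by
  intro s u h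
  induction h with
  | root hm => intro t hts; exact root2' hts hm
  | @appL s₁ s₁' w h ih =>
    intro t hts
    rcases clo_evar_app_inv hts with ⟨a₁, a₂, n, rfl, rfl, rfl⟩ | ⟨X, rfl, hX⟩ | ⟨Y, rfl, hY⟩
    · obtain ⟨a₁', h1, rfl⟩ := clo_ren_inv rootM_ren_inv h rfl
      refine ⟨sub (app a₁' a₂) (var n), Clo.subL (Clo.appL h1), Clo.root ?_⟩
      have := RootEVar.beta (t := app a₁' a₂) (n := n)
      rwa [subst_var_eq] at this
    · obtain ⟨r₁, h1, h2⟩ := ih hX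
      exact ⟨app r₁ w, Clo.appL h1, Clo.appL h2⟩
    · exact ⟨app s₁' Y, Clo.appL h, Clo.appR hY⟩
  | @appR s₂ s₂' w h ih =>
    intro t hts
    rcases clo_evar_app_inv hts with ⟨a₁, a₂, n, rfl, rfl, rfl⟩ | ⟨X, rfl, hX⟩ | ⟨Y, rfl, hY⟩
    · obtain ⟨a₂', h1, rfl⟩ := clo_ren_inv rootM_ren_inv h rfl
      refine ⟨sub (app a₁ a₂') (var n), Clo.subL (Clo.appR h1), Clo.root ?_⟩
      have := RootEVar.beta (t := app a₁ a₂') (n := n)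
      rwa [subst_var_eq] at this
    · exact ⟨app X s₂', Clo.appR h, Clo.appL hX⟩
    · obtain ⟨r₁, h1, h2⟩ := ih hY
      exact ⟨app w r₁, Clo.appR h1, Clo.appR h2⟩
  | @subL s₁ s₁' w h ih =>
    intro t hts
    rcases clo_evar_sub_inv hts with ⟨a₁, a₂, n, rfl, rfl, rfl⟩ | ⟨a, b, rfl, P⟩ |
      ⟨X, rfl, hX⟩ | ⟨Y, rfl, hY⟩
    · obtain ⟨a₁', h1, rfl⟩ := clo_ren_inv rootM_ren_inv h rfl
      refine ⟨sub (sub a₁' a₂) (var n), Clo.subL (Clo.subL h1), Clo.root ?_⟩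
      have := RootEVar.beta (t := sub a₁' a₂) (n := n)
      rwa [subst_var_eq, ren] at this
    · obtain ⟨r₁, h1, h2⟩ := root1 P h
      cases h1 with
      | root hr => cases hr
      | @subL _ a₁ _ ha =>
        rw [shift_eq] at ha
        obtain ⟨a₀, ha₀, rfl⟩ := clo_ren_inv rootM_ren_inv ha rfl
        refine ⟨sub a₀ (sub b w), Clo.subL ha₀, Clo.root (RootEVar.under ?_)⟩
        rwa [shift_eq]
      | @subR _ b₁ _ hb =>
        exact ⟨sub a (sub b₁ w), Clo.subR (Clo.subL hb), Clo.root (RootEVar.under h2)⟩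
    · obtain ⟨r₁, h1, h2⟩ := ih hX
      exact ⟨sub r₁ w, Clo.subL h1, Clo.subL h2⟩
    · exact ⟨sub s₁' Y, Clo.subL h, Clo.subR hY⟩
  | @subR s₂ s₂' w h ih =>
    intro t hts
    rcases clo_evar_sub_inv hts with ⟨a₁, a₂, n, rfl, rfl, rfl⟩ | ⟨a, b, rfl, P⟩ |
      ⟨X, rfl, hX⟩ | ⟨Y, rfl, hY⟩
    · obtain ⟨a₂', h1, rfl⟩ := clo_ren_inv rootM_ren_inv h rfl
      refine ⟨sub (sub a₁ a₂') (var n), Clo.subL (Clo.subR h1), Clo.root ?_⟩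
      have := RootEVar.beta (t := sub a₁ a₂') (n := n)
      rwa [subst_var_eq, ren] at this
    · exact ⟨sub a (sub b s₂'), Clo.subR (Clo.subR h), Clo.root (RootEVar.under P)⟩
    · exact ⟨sub X s₂', Clo.subR h, Clo.subL hX⟩
    · obtain ⟨r₁, h1, h2⟩ := ih hY
      exact ⟨sub w r₁, Clo.subR h1, Clo.subR h2⟩

end VTm

namespace VTm

/-! ### Substitution algebra for Part 2 -/

theorem subst_shift0 (V Z : VTm) : subst (shift 0 V) 0 Z = V := by
  rw [shift_eq, subst_eq, psub_ren]
  have : (fun n => sσ 0 Z (shiftρ 0 n)) = fun n => var n := by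
    funext n; simp [sσ, shiftρ]
  rw [this, psub_id]

theorem lemA3 (c : VTm) (k : Nat) (w V : VTm) :
    subst (subst c 0 w) k V = subst (subst c (k+1) (shift 0 V)) 0 (subst w k V) := by
  simp only [subst_eq, psub_psub]
  refine psub_congr (fun m => ?_) c
  rcases m with _ | m
  · simp [sσ, psub]
  · rcases Nat.lt_trichotomy m k with h | h | h
    · have h1 : ¬ (m+1 = k+1) := by omega
      have h2 : ¬ (k+1 < m+1) := by omega
      have h3 : ¬ (m = k) := by omega
      have h4 : ¬ (k < m) := by omega
      have h5 : ¬ (m+1 = 0) := by omega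
      have h6 : (0 < m+1) := by omega
      simp [sσ, psub, h1, h2, h3, h4, h5, h6]
    · subst h
      have h5 : ¬ (m+1 = 0) := by omega
      have h6 : (0 < m + 1) := by omega
      have e1 : sσ 0 w (m+1) = var m := by simp [sσ, h5, h6]
      have e2 : sσ (m+1) (shift 0 V) (m+1) = shift 0 V := by simp [sσ]
      have e3 : sσ m V m = V := by simp [sσ]
      rw [e1, e2]
      show sσ m V m = psub (sσ 0 (psub (sσ m V) w)) (shift 0 V)
      rw [e3, shift_eq, psub_ren]
      have : (fun n => sσ 0 (psub (sσ m V) w) (shiftρ 0 n)) = fun n => var n := by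
        funext n; simp [sσ, shiftρ]
      rw [this, psub_id]
    · have h1 : ¬ (m+1 = k+1) := by omega
      have h2 : (k+1 < m+1) := by omega
      have h3 : ¬ (m = k) := by omega
      have h4 : (k < m) := by omega
      have h5 : ¬ (m+1 = 0) := by omega
      have h6 : (0 < m+1) := by omega
      have h7 : ¬ (m = 0) := by omega
      have h8 : (0 < m) := by omega
      simp only [sσ, if_neg h5, if_pos h6, Nat.add_sub_cancel, psub, if_neg h3, if_pos h4,
        if_neg h1, if_pos h2, if_neg h7, if_pos h8]

theorem shift1_subst_comm (c : VTm) (k : Nat) (V : VTm) :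
    subst (shift 1 c) (k+2) (shift 0 (shift 0 V)) = shift 1 (subst c (k+1) (shift 0 V)) := by
  simp only [subst_eq, shift_eq, psub_ren, ren_psub]
  refine psub_congr (fun m => ?_) c
  rcases m with _ | m
  · have h1 : ¬ ((0:Nat) = k+1) := by omega
    have h2 : ¬ (k+1 < 0) := by omega
    simp [sσ, shiftρ, ren, h1, h2]
  · by_cases h : m = k
    · subst h
      have h1 : shiftρ 1 (m+1) = m + 2 := by simp [shiftρ]
      rw [h1]
      have h2 : sσ (m+2) (ren (shiftρ 0) (ren (shiftρ 0) V)) (m+2) = ren (shiftρ 0) (ren (shiftρ 0) V) := by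
        simp [sσ]
      rw [h2]
      have h3 : sσ (m+1) (ren (shiftρ 0) V) (m+1) = ren (shiftρ 0) V := by simp [sσ]
      rw [h3]
      simp only [ren_ren]
      exact ren_congr (fun n => by simp [shiftρ]) V
    · have h1 : shiftρ 1 (m+1) = m + 2 := by simp [shiftρ]
      rw [h1]
      rcases Nat.lt_or_ge m k with hlt | hge
      · have e1 : ¬ (m+2 = k+2) := by omega
        have e2 : ¬ (k+2 < m+2) := by omega
        have e3 : ¬ (m+1 = k+1) := by omega
        have e4 : ¬ (k+1 < m+1) := by omega
        simp [sσ, e1, e2, e3, e4, ren, shiftρ, h]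
      · have hgt : k < m := by omega
        have e1 : ¬ (m+2 = k+2) := by omega
        have e2 : (k+2 < m+2) := by omega
        have e3 : ¬ (m+1 = k+1) := by omega
        have e4 : (k+1 < m+1) := by omega
        have e5 : (1 ≤ m) := by omega
        simp only [sσ, if_neg e1, if_pos e2, Nat.add_sub_cancel, if_neg e3, if_pos e4, ren, shiftρ]
        have : (if 1 ≤ m then var (m+1) else var m) = var (m+1) := by simp [e5]
        simp [e5]

theorem shift1_subst1 (a W : VTm) : subst (shift 1 a) 1 W = a := by
  rw [shift_eq, subst_eq, psub_ren]
  have : (fun n => sσ 1 W (shiftρ 1 n)) = fun n => var n := by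
    funext n
    rcases n with _ | n
    · simp [sσ, shiftρ]
    · have h1 : shiftρ 1 (n+1) = n+2 := by simp [shiftρ]
      have h2 : ¬ (n+2 = 1) := by omega
      have h3 : (1 < n+2) := by omega
      simp [sσ, h1, h2, h3]
  rw [this, psub_id]

theorem shift1_shift1_subst1 (a W : VTm) : subst (shift 1 (shift 1 a)) 1 W = shift 1 a := by
  simp only [shift_eq, subst_eq, psub_ren, ren_ren]
  rw [← psub_varρ]
  refine psub_congr (fun n => ?_) a
  rcases n with _ | n
  · simp [sσ, shiftρ]
  · have h1 : shiftρ 1 (n+1) = n+2 := by simp [shiftρ]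
    have h2 : shiftρ 1 (n+2) = n+3 := by simp [shiftρ]
    have h3 : ¬ (n+3 = 1) := by omega
    have h4 : (1 < n+3) := by omega
    simp [sσ, h1, h2, h3, h4, shiftρ]

def σv (n : Nat) : Nat → Nat := fun m => if m = 0 then n else m

theorem subst_shift1_var (c : VTm) (n : Nat) :
    subst (shift 1 c) 0 (var n) = ren (σv n) c := by
  rw [shift_eq, subst_var_eq, ren_ren]
  exact ren_congr (fun m => by
    rcases m with _ | m
    · simp [sρ, σv, shiftρ]
    · have h1 : shiftρ 1 (m+1) = m+2 := by simp [shiftρ]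
      have h2 : ¬ (m+2 = 0) := by omega
      have h3 : (0 < m+2) := by omega
      simp [sρ, σv, h1, h2, h3]) c

theorem ren_liftσv_shift1 (n : Nat) (p : VTm) :
    ren (liftρ (σv n)) (shift 1 p) = shift 1 p := by
  rw [shift_eq, ren_ren]
  exact ren_congr (fun m => by
    rcases m with _ | m
    · simp [liftρ, σv, shiftρ]
    · have h1 : shiftρ 1 (m+1) = m+2 := by simp [shiftρ]
      simp [liftρ, σv, h1, shiftρ]) p

theorem ren_lift_shiftρ1 (p : VTm) :
    ren (liftρ (shiftρ 1)) (shift 1 p) = shift 1 (shift 1 p) := by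
  simp only [shift_eq, ren_ren]
  exact ren_congr (fun m => by
    rcases m with _ | m
    · simp [liftρ, shiftρ]
    · have h1 : shiftρ 1 (m+1) = m+2 := by simp [shiftρ]
      have h2 : liftρ (shiftρ 1) (m+2) = m+3 := by simp [liftρ, shiftρ]
      simp [h1, h2, shiftρ]) p

theorem shift11_ren (p c : VTm) :
    sub (shift 1 (shift 1 p)) (shift 1 c) = ren (shiftρ 1) (sub (shift 1 p) c) := by
  show _ = sub (ren (liftρ (shiftρ 1)) (shift 1 p)) (ren (shiftρ 1) c)
  rw [← shift_eq]
  congr 1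
  simp only [shift_eq, ren_ren]
  exact ren_congr (fun m => by
    rcases m with _ | m
    · simp [liftρ, shiftρ]
    · have h1 : shiftρ 1 (m+1) = m+2 := by simp [shiftρ]
      have h2 : liftρ (shiftρ 1) (m+2) = m+3 := by simp [liftρ, shiftρ]
      simp [h1, h2, shiftρ]) p

theorem sρ1_lift (n : Nat) : ∀ m, sρ 1 (n+1) m = liftρ (sρ 0 n) m := by
  intro m
  rcases m with _ | m
  · simp [sρ, liftρ]
  · rcases m with _ | m
    · simp [sρ, liftρ]
    · have h1 : ¬ (m+2 = 1) := by omega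
      have h2 : (1 < m+2) := by omega
      have h3 : ¬ (m+1 = 0) := by omega
      have h4 : (0 < m+1) := by omega
      simp [sρ, liftρ, h1, h2, h3, h4]

theorem key_beta_var (p c₀ : VTm) (n : Nat) :
    subst (subst (shift 1 p) 0 (lam c₀)) 0 (var n) =
      subst p 0 (lam (ren (liftρ (sρ 0 n)) c₀)) := by
  simp only [subst_eq, shift_eq, psub_ren, psub_psub]
  refine psub_congr (fun m => ?_) p
  rcases m with _ | m
  · have h0 : shiftρ 1 0 = 0 := by simp [shiftρ]
    rw [h0]
    have h1 : sσ 0 (lam c₀) 0 = lam c₀ := by simp [sσ]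
    rw [h1]
    simp only [psub, sσ, if_pos rfl]
    congr 1
    rw [← psub_varρ]
    refine psub_congr (fun j => ?_) c₀
    rcases j with _ | j
    · simp [upσ, liftρ]
    · rcases j with _ | j
      · simp [upσ, sσ, ren, liftρ, sρ]
      · have e1 : ¬ (j+1 = 0) := by omega
        have e2 : (0 < j+1) := by omega
        have e3 : ¬ (j+2 = 0) := by omega
        have e4 : (0 < j+2) := by omega
        simp [upσ, sσ, ren, liftρ, sρ, e1, e2, e3, e4]
  · have h0 : shiftρ 1 (m+1) = m+2 := by simp [shiftρ]
    rw [h0]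
    have h1 : sσ 0 (lam c₀) (m+2) = var (m+1) := by
      have e1 : ¬ (m+2 = 0) := by omega
      have e2 : (0 < m+2) := by omega
      simp [sσ, e1, e2]
    rw [h1]
    have e1 : ¬ (m+1 = 0) := by omega
    have e2 : (0 < m+1) := by omega
    simp [psub, sσ, e1, e2]

theorem lift2_shift11 (n : Nat) (p : VTm) :
    ren (liftρ (liftρ (sρ 0 n))) (shift 1 (shift 1 p)) = shift 1 p := by
  simp only [shift_eq, ren_ren]
  exact ren_congr (fun m => by
    rcases m with _ | m
    · simp [liftρ, shiftρ]
    · have h1 : shiftρ 1 (m+1) = m+2 := by simp [shiftρ]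
      have h2 : shiftρ 1 (m+2) = m+3 := by simp [shiftρ]
      have h3 : ¬ (m+1 = 0) := by omega
      have h4 : (0 < m+1) := by omega
      simp [h1, h2, liftρ, sρ, shiftρ, h3, h4]) p

theorem clo_shift1 {R : VTm → VTm → Prop}
    (hR : ∀ {a b : VTm}, R a b → ∀ ρ, R (ren ρ a) (ren ρ b))
    {a b : VTm} (h : Clo R a b) : Clo R (shift 1 a) (shift 1 b) := by
  rw [shift_eq, shift_eq]; exact clo_ren hR h _

end VTm

namespace VTm

/-! ### Part 2 core lemmas -/

theorem lemF : ∀ {x y : VTm}, RootEVar x y → ∀ {k : Nat} {v V : VTm}, V = lam v →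
    RootEAbs (subst x k V) (subst y k V) ∨ RootEVar (subst x k V) (subst y k V) := by
  intro x y h
  induction h with
  | @beta c n =>
    intro k v V hV
    subst hV
    rw [lemA3]
    by_cases h : n = k
    · subst h
      left
      simp only [subst, if_pos rfl]
      exact RootEAbs.beta
    · right
      simp only [subst, if_neg h]
      rcases Nat.lt_or_ge k n with hk | hk
      · simp only [if_pos hk]
        exact RootEVar.beta
      · have : ¬ (k < n) := by omega
        simp only [if_neg this]
        exact RootEVar.beta
  | @under c b s r P ih =>
    intro k v V hV
    have hV' : shift 0 V = lam (shift 1 v) := by rw [hV]; simp [shift]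
    have := ih (k := k+1) hV'
    simp only [subst] at this ⊢
    rw [shift1_subst_comm] at this
    rcases this with h | h
    · exact Or.inl (RootEAbs.under h)
    · exact Or.inr (RootEVar.under h)

theorem lemFclo : ∀ {x y : VTm}, Clo RootEVar x y → ∀ {k : Nat} {v V : VTm}, V = lam v →
    Clo RootEAbs (subst x k V) (subst y k V) ∨ Clo RootEVar (subst x k V) (subst y k V) := by
  intro x y h
  induction h with
  | root hr =>
    intro k v V hV
    rcases lemF hr hV with h | h
    · exact Or.inl (Clo.root h)
    · exact Or.inr (Clo.root h)
  | appL h ih =>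
    intro k v V hV
    simp only [subst]
    rcases ih hV with h' | h'
    · exact Or.inl (Clo.appL h')
    · exact Or.inr (Clo.appL h')
  | appR h ih =>
    intro k v V hV
    simp only [subst]
    rcases ih hV with h' | h'
    · exact Or.inl (Clo.appR h')
    · exact Or.inr (Clo.appR h')
  | subL h ih =>
    intro k v V hV
    have hV' : shift 0 V = lam (shift 1 v) := by rw [hV]; simp [shift]
    simp only [subst]
    rcases ih hV' with h' | h'
    · exact Or.inl (Clo.subL h')
    · exact Or.inr (Clo.subL h')
  | subR h ih =>
    intro k v V hV
    simp only [subst]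
    rcases ih hV with h' | h'
    · exact Or.inl (Clo.subR h')
    · exact Or.inr (Clo.subR h')

theorem excl : ∀ {x s : VTm}, RootEVar x s → ∀ {T b : VTm}, x = sub T b →
    ∀ {T' s' : VTm}, ¬ RootEAbs (sub T' b) s' := by
  intro x s h
  induction h with
  | @beta a n =>
    intro T b he T' s' h'
    injection he with he1 he2
    subst he2
    cases h'
  | @under a b₀ s₀ r P ih =>
    intro T b he T' s' h'
    injection he with he1 he2
    subst he2
    cases h' with
    | under h'' => exact ih rfl h''

theorem lemI : ∀ {x q : VTm}, RootEAbs x q → ∀ {T c : VTm}, x = sub T c →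
    ∀ {T' : VTm}, Clo RootEVar T' T →
    ∃ q', RootEAbs (sub T' c) q' ∧ StepE q' q := by
  intro x q h
  induction h with
  | @beta t u =>
    intro T c he T' hc
    injection he with he1 he2
    subst he1; subst he2
    refine ⟨subst T' 0 (lam u), RootEAbs.beta, ?_⟩
    exact lemFclo hc rfl
  | @under t b s r P ih =>
    intro T c he T' hc
    injection he with he1 he2
    subst he1; subst he2
    obtain ⟨q₁, h1, h2⟩ := ih rfl (clo_shift1 rootEVar_ren hc)
    refine ⟨sub q₁ r, RootEAbs.under h1, ?_⟩
    rcases h2 with h2 | h2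
    · exact Or.inl (Clo.subL h2)
    · exact Or.inr (Clo.subL h2)

theorem lemK : ∀ {x q : VTm}, RootEAbs x q → ∀ {T : VTm} {σ : Nat → Nat} {c : VTm},
    x = sub T (ren σ c) → ren (liftρ σ) T = T →
    ∃ Z, RootEAbs (sub T c) Z ∧ q = ren σ Z := by
  intro x q h
  induction h with
  | @beta t u =>
    intro T σ c he hT
    injection he with he1 he2
    subst he1
    obtain ⟨v, rfl, hv⟩ := ren_eq_lam he2.symm
    refine ⟨subst t 0 (lam v), RootEAbs.beta, ?_⟩
    rw [ren_subst0, hT]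
    simp only [ren]
    rw [hv]
  | @under t b s r P ih =>
    intro T σ c he hT
    injection he with he1 he2
    subst he1
    obtain ⟨c₁, r₁, rfl, hb, hr⟩ := ren_eq_sub he2.symm
    have hT' : ren (liftρ (liftρ σ)) (shift 1 t) = shift 1 t := by
      rw [ren_shift1, hT]
    have he' : sub (shift 1 t) b = sub (shift 1 t) (ren (liftρ σ) c₁) := by rw [hb]
    obtain ⟨Z₁, h1, h2⟩ := ih he' hT'
    refine ⟨sub Z₁ r₁, RootEAbs.under h1, ?_⟩
    simp [ren, h2, ← hr]

theorem lemJ : ∀ {x s₀ : VTm}, RootEVar x s₀ → ∀ {c b' : VTm}, x = sub (shift 1 c) b' →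
    ∀ {p q : VTm}, RootEAbs (sub (shift 1 p) s₀) q →
    ∃ Z, RootEAbs (sub (shift 1 p) c) Z ∧ RootEVar (sub (shift 1 Z) b') q := by
  intro x s₀ h
  induction h with
  | @beta a n =>
    intro c b' he p q h2
    injection he with he1 he2
    subst he2
    rw [he1, subst_shift1_var] at h2
    obtain ⟨Z, h1, h3⟩ := lemK h2 rfl (ren_liftσv_shift1 n p)
    refine ⟨Z, h1, ?_⟩
    have := RootEVar.beta (t := shift 1 Z) (n := n)
    rwa [subst_shift1_var, ← h3] at this
  | @under a b'' s₁ r'' P ih =>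
    intro c b' he p q h2
    injection he with he1 he2
    subst he1; subst he2
    cases h2 with
    | @under _ _ q₁ _ QQ =>
      obtain ⟨Z₁, h1, h3⟩ := ih rfl QQ
      rw [shift11_ren] at h1
      obtain ⟨Z, hZ, rfl⟩ := rootEAbs_ren_inv h1 rfl
      rw [← shift_eq] at h3
      exact ⟨Z, hZ, RootEVar.under h3⟩

theorem lemCab : ∀ {x s₂ : VTm}, RootEAbs x s₂ → ∀ {s₀ c : VTm}, x = sub (shift 1 s₀) c →
    ∀ {a b : VTm}, RootEVar (sub (shift 1 a) b) s₀ →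
    ∃ S, RootEAbs (sub (shift 1 b) c) S ∧
      (RootEAbs (sub (shift 1 a) S) s₂ ∨ RootEVar (sub (shift 1 a) S) s₂) := by
  intro x s₂ h
  induction h with
  | @beta t u =>
    intro s₀ c he a b P
    injection he with he1 he2
    subst he1; subst he2
    refine ⟨subst (shift 1 b) 0 (lam u), RootEAbs.beta, ?_⟩
    have P' : RootEVar (sub (shift 1 (shift 1 a)) (shift 1 b)) (shift 1 s₀) := by
      have := rootEVar_ren P (shiftρ 1)
      simp only [ren] at this
      rwa [ren_lift_shiftρ1, ← shift_eq, ← shift_eq] at this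
    have := lemF P' (k := 0) (v := u) rfl
    simp only [subst] at this
    rwa [shift1_shift1_subst1] at this
  | @under t b₂ s₃ r₂ prem ih =>
    intro s₀ c he a b P
    injection he with he1 he2
    subst he1; subst he2
    have P' : RootEVar (sub (shift 1 (shift 1 a)) (shift 1 b)) (shift 1 s₀) := by
      have := rootEVar_ren P (shiftρ 1)
      simp only [ren] at this
      rwa [ren_lift_shiftρ1, ← shift_eq, ← shift_eq] at this
    obtain ⟨S₁, h1, h2⟩ := ih rfl P'
    refine ⟨sub S₁ r₂, RootEAbs.under h1, ?_⟩
    rcases h2 with h2 | h2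
    · exact Or.inl (RootEAbs.under h2)
    · exact Or.inr (RootEVar.under h2)

theorem lemL : ∀ {x q : VTm}, RootEAbs x q → ∀ {T b₂ : VTm}, x = sub T b₂ →
    ∀ {X : VTm}, Clo RootEVar X b₂ →
    ∃ Z, RootEAbs (sub T X) Z ∧ StepE Z q := by
  intro x q h
  induction h with
  | @beta t u =>
    intro T b₂ he X hc
    injection he with he1 he2
    subst he1; subst he2
    cases hc with
    | root hr =>
      rcases rootEVar_inv hr with ⟨c, n, rfl, he⟩ | ⟨a, b, r, s₀, rfl, he, _⟩
      · rw [subst_var_eq] at he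
        obtain ⟨c₀, rfl, hc₀⟩ := ren_eq_lam he.symm
        refine ⟨sub (subst (shift 1 t) 0 (lam c₀)) (var n),
          RootEAbs.under RootEAbs.beta, Or.inr (Clo.root ?_)⟩
        have := RootEVar.beta (t := subst (shift 1 t) 0 (lam c₀)) (n := n)
        rwa [key_beta_var, hc₀] at this
      · exact absurd he (by simp)
  | @under t b₃ q₁ r₃ prem ih =>
    intro T b₂ he X hc
    injection he with he1 he2
    subst he1; subst he2
    rcases clo_evar_sub_inv hc with ⟨c₁, c₂, n, rfl, hb, hr⟩ | ⟨c, d, rfl, P⟩ |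
      ⟨X₁, rfl, hX⟩ | ⟨Y, rfl, hY⟩
    · -- X = sub (sub c₁ c₂) (var n), b₃ = ren (liftρ (sρ 0 n)) c₁, r₃ = ren (sρ 0 n) c₂
      have he2 : sub (shift 1 t) b₃ =
          ren (liftρ (sρ 0 n)) (sub (shift 1 (shift 1 t)) c₁) := by
        simp only [ren]
        rw [lift2_shift11, hb]
      rw [he2] at prem
      obtain ⟨q₀, hq₀, rfl⟩ := rootEAbs_ren_inv prem rfl
      refine ⟨sub (sub q₀ c₂) (var n),
        RootEAbs.under (RootEAbs.under hq₀), Or.inr (Clo.root ?_)⟩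
      have := RootEVar.beta (t := sub q₀ c₂) (n := n)
      have e : subst (sub q₀ c₂) 0 (var n) =
          sub (ren (liftρ (sρ 0 n)) q₀) (ren (sρ 0 n) c₂) := by
        simp only [subst]
        have e0 : shift 0 (var n) = var (n+1) := by simp [shift]
        rw [e0, subst_var_eq, subst_var_eq]
        congr 1
        exact ren_congr (sρ1_lift n) q₀
      rw [e, ← hr] at this
      exact this
    · -- X = sub c (sub d r₃), RootEVar (sub (shift 1 c) d) b₃
      obtain ⟨Z', h1, h2⟩ := lemJ P rfl prem
      exact ⟨sub Z' (sub d r₃), RootEAbs.under h1, Or.inr (Clo.root (RootEVar.under h2))⟩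
    · -- X = sub X₁ r₃, Clo evar X₁ b₃
      obtain ⟨Z', h1, h2⟩ := ih rfl hX
      refine ⟨sub Z' r₃, RootEAbs.under h1, ?_⟩
      rcases h2 with h2 | h2
      · exact Or.inl (Clo.subL h2)
      · exact Or.inr (Clo.subL h2)
    · -- X = sub b₃ Y, Clo evar Y r₃
      exact ⟨sub q₁ Y, RootEAbs.under prem, Or.inr (Clo.subR hY)⟩

end VTm

namespace VTm

theorem root1ab : ∀ {t s : VTm}, RootEVar t s → ∀ {u : VTm}, Clo RootEAbs s u →
    ∃ r, Clo RootEAbs t r ∧ (RootEAbs r u ∨ RootEVar r u) := by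
  intro t s h
  induction h with
  | @beta a n =>
    intro u hm
    rw [subst_var_eq] at hm
    obtain ⟨a', ha', rfl⟩ := clo_ren_inv rootEAbs_ren_inv hm rfl
    refine ⟨sub a' (var n), Clo.subL ha', Or.inr ?_⟩
    have := RootEVar.beta (t := a') (n := n)
    rwa [subst_var_eq] at this
  | @under a b s₀ r₀ P ih =>
    intro u hm
    cases hm with
    | root hr =>
      cases hr with
      | @beta _ v =>
        refine ⟨sub a (subst b 0 (lam v)), Clo.subR (Clo.root RootEAbs.beta), ?_⟩
        have := lemF P (k := 0) (v := v) (V := lam v) rfl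
        simp only [subst] at this
        rwa [shift1_subst1] at this
      | @under _ b₂ s₂ r₂ prem₂ =>
        obtain ⟨S, h1, h2⟩ := lemCab prem₂ rfl P
        refine ⟨sub a (sub S r₂), Clo.subR (Clo.root (RootEAbs.under h1)), ?_⟩
        rcases h2 with h2 | h2
        · exact Or.inl (RootEAbs.under h2)
        · exact Or.inr (RootEVar.under h2)
    | @subL _ s₀' _ hs =>
      obtain ⟨r₁, h1, h2⟩ := ih hs
      cases h1 with
      | root hr' => exact absurd hr' (excl P rfl)
      | @subL _ a₁ _ ha =>
        rw [shift_eq] at ha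
        obtain ⟨a₀, ha₀, rfl⟩ := clo_ren_inv rootEAbs_ren_inv ha rfl
        rw [← shift_eq] at h2
        refine ⟨sub a₀ (sub b r₀), Clo.subL ha₀, ?_⟩
        rcases h2 with h2 | h2
        · exact Or.inl (RootEAbs.under h2)
        · exact Or.inr (RootEVar.under h2)
      | @subR _ b₁ _ hb =>
        refine ⟨sub a (sub b₁ r₀), Clo.subR (Clo.subL hb), ?_⟩
        rcases h2 with h2 | h2
        · exact Or.inl (RootEAbs.under h2)
        · exact Or.inr (RootEVar.under h2)
    | @subR _ r₀' _ hr =>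
      exact ⟨sub a (sub b r₀'), Clo.subR (Clo.subR hr), Or.inr (RootEVar.under P)⟩

theorem root2ab : ∀ {t s : VTm}, Clo RootEVar t s → ∀ {u : VTm}, RootEAbs s u →
    ∃ r, Clo RootEAbs t r ∧ StepE r u := by
  intro t s h1
  cases h1 with
  | root hr =>
    intro u h2
    obtain ⟨r, ha, hb⟩ := root1ab hr (Clo.root h2)
    refine ⟨r, ha, ?_⟩
    rcases hb with hb | hb
    · exact Or.inl (Clo.root hb)
    · exact Or.inr (Clo.root hb)
  | appL h => intro u h2; cases h2
  | appR h => intro u h2; cases h2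
  | subL h =>
    intro u h2
    obtain ⟨q', ha, hb⟩ := lemI h2 rfl h
    exact ⟨q', Clo.root ha, hb⟩
  | subR h =>
    intro u h2
    obtain ⟨Z, ha, hb⟩ := lemL h2 rfl h
    exact ⟨Z, Clo.root ha, hb⟩

theorem main2 : ∀ {s u : VTm}, Clo RootEAbs s u → ∀ {t : VTm}, Clo RootEVar t s →
    ∃ r, Clo RootEAbs t r ∧ StepE r u := by
  intro s u h
  induction h with
  | root hm => intro t hts; exact root2ab hts hm
  | @appL s₁ s₁' w h ih =>
    intro t hts
    rcases clo_evar_app_inv hts with ⟨a₁, a₂, n, rfl, rfl, rfl⟩ | ⟨X, rfl, hX⟩ | ⟨Y, rfl, hY⟩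
    · obtain ⟨a₁', h1, rfl⟩ := clo_ren_inv rootEAbs_ren_inv h rfl
      refine ⟨sub (app a₁' a₂) (var n), Clo.subL (Clo.appL h1), Or.inr (Clo.root ?_)⟩
      have := RootEVar.beta (t := app a₁' a₂) (n := n)
      rwa [subst_var_eq] at this
    · obtain ⟨r₁, h1, h2⟩ := ih hX
      refine ⟨app r₁ w, Clo.appL h1, ?_⟩
      rcases h2 with h2 | h2
      · exact Or.inl (Clo.appL h2)
      · exact Or.inr (Clo.appL h2)
    · exact ⟨app s₁' Y, Clo.appL h, Or.inr (Clo.appR hY)⟩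
  | @appR s₂ s₂' w h ih =>
    intro t hts
    rcases clo_evar_app_inv hts with ⟨a₁, a₂, n, rfl, rfl, rfl⟩ | ⟨X, rfl, hX⟩ | ⟨Y, rfl, hY⟩
    · obtain ⟨a₂', h1, rfl⟩ := clo_ren_inv rootEAbs_ren_inv h rfl
      refine ⟨sub (app a₁ a₂') (var n), Clo.subL (Clo.appR h1), Or.inr (Clo.root ?_)⟩
      have := RootEVar.beta (t := app a₁ a₂') (n := n)
      rwa [subst_var_eq] at this
    · exact ⟨app X s₂', Clo.appR h, Or.inr (Clo.appL hX)⟩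
    · obtain ⟨r₂, h1, h2⟩ := ih hY
      refine ⟨app w r₂, Clo.appR h1, ?_⟩
      rcases h2 with h2 | h2
      · exact Or.inl (Clo.appR h2)
      · exact Or.inr (Clo.appR h2)
  | @subL s₁ s₁' w h ih =>
    intro t hts
    rcases clo_evar_sub_inv hts with ⟨a₁, a₂, n, rfl, rfl, rfl⟩ | ⟨a, b, rfl, P⟩ |
      ⟨X, rfl, hX⟩ | ⟨Y, rfl, hY⟩
    · obtain ⟨a₁', h1, rfl⟩ := clo_ren_inv rootEAbs_ren_inv h rfl
      refine ⟨sub (sub a₁' a₂) (var n), Clo.subL (Clo.subL h1), Or.inr (Clo.root ?_)⟩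
      have := RootEVar.beta (t := sub a₁' a₂) (n := n)
      rwa [subst_var_eq, ren] at this
    · obtain ⟨r, h1, h2⟩ := root1ab (RootEVar.under P) (Clo.subL h)
      refine ⟨r, h1, ?_⟩
      rcases h2 with h2 | h2
      · exact Or.inl (Clo.root h2)
      · exact Or.inr (Clo.root h2)
    · obtain ⟨r₁, h1, h2⟩ := ih hX
      refine ⟨sub r₁ w, Clo.subL h1, ?_⟩
      rcases h2 with h2 | h2
      · exact Or.inl (Clo.subL h2)
      · exact Or.inr (Clo.subL h2)
    · exact ⟨sub s₁' Y, Clo.subL h, Or.inr (Clo.subR hY)⟩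
  | @subR s₂ s₂' w h ih =>
    intro t hts
    rcases clo_evar_sub_inv hts with ⟨a₁, a₂, n, rfl, rfl, rfl⟩ | ⟨a, b, rfl, P⟩ |
      ⟨X, rfl, hX⟩ | ⟨Y, rfl, hY⟩
    · obtain ⟨a₂', h1, rfl⟩ := clo_ren_inv rootEAbs_ren_inv h rfl
      refine ⟨sub (sub a₁ a₂') (var n), Clo.subL (Clo.subR h1), Or.inr (Clo.root ?_)⟩
      have := RootEVar.beta (t := sub a₁ a₂') (n := n)
      rwa [subst_var_eq, ren] at this
    · exact ⟨sub a (sub b s₂'), Clo.subR (Clo.subR h), Or.inr (Clo.root (RootEVar.under P))⟩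
    · exact ⟨sub X s₂', Clo.subR h, Or.inr (Clo.subL hX)⟩
    · obtain ⟨r₂, h1, h2⟩ := ih hY
      refine ⟨sub w r₂, Clo.subR h1, ?_⟩
      rcases h2 with h2 | h2
      · exact Or.inl (Clo.subR h2)
      · exact Or.inr (Clo.subR h2)

end VTm


/-- linear postponement of variable-exponential steps. -/
theorem evar_linear_postponement :
    (∀ t s u : VTm, StepEVar t s → StepM s u →
      ∃ r, StepM t r ∧ StepEVar r u) ∧
    (∀ t s u : VTm, StepEVar t s → StepEAbs s u →
      ∃ r, StepEAbs t r ∧ StepE r u) := by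
  constructor
  · intro t s u h1 h2
    exact VTm.main1 h2 h1
  · intro t s u h1 h2
    exact VTm.main2 h2 h1
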